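/- arXiv:1802.01226 — 3 statements merged into one kernel-verified Lean document; each statement's English description precedes it below -/
import Mathlib

section
/- Soundness of the differential radical invariant rule (dRI): Let f be a polynomial vector field on ℝⁿ, let Q ⊆ ℝⁿ, let p be a polynomial, let N ≥ 1, and let g₀,…,g_{N−1} be polynomials such that L_f^N(p)(x) = Σ_{i<N} gᵢ(x)·L_f^i(p)(x) for every x ∈ Q. If φ : [0,T] → ℝⁿ is a solution of x' = f(x) with φ(t) ∈ Q for all t ∈ [0,T] and L_f^i(p)(φ(0)) = 0 for every i < N, then p(φ(t)) = 0 for all t ∈ [0,T]. -/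
open MvPolynomial Set

/-- Lie derivative of polynomial `p` along the polynomial vector field `f`. -/
noncomputable def lieD {n : ℕ} (f : Fin n → MvPolynomial (Fin n) ℝ)
    (p : MvPolynomial (Fin n) ℝ) : MvPolynomial (Fin n) ℝ :=
  ∑ i, pderiv i p * f i

/-- `φ` is a solution of `x' = f(x)` on `[0,T]`. -/
def IsSol {n : ℕ} (f : Fin n → MvPolynomial (Fin n) ℝ) (T : ℝ)
    (φ : ℝ → (Fin n → ℝ)) : Prop :=
  ∀ t ∈ Icc (0 : ℝ) T, HasDerivWithinAt φ (fun i => eval (φ t) (f i)) (Icc (0 : ℝ) T) t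

lemma lieD_C {n : ℕ} (f : Fin n → MvPolynomial (Fin n) ℝ) (a : ℝ) :
    lieD f (C a) = 0 := by
  simp [lieD]

lemma lieD_add {n : ℕ} (f : Fin n → MvPolynomial (Fin n) ℝ) (p q : MvPolynomial (Fin n) ℝ) :
    lieD f (p + q) = lieD f p + lieD f q := by
  simp [lieD, add_mul, Finset.sum_add_distrib]

lemma lieD_mul_X {n : ℕ} (f : Fin n → MvPolynomial (Fin n) ℝ) (p : MvPolynomial (Fin n) ℝ)
    (j : Fin n) : lieD f (p * X j) = lieD f p * X j + p * f j := by
  classical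
  unfold lieD
  simp only [pderiv_mul, add_mul, Finset.sum_add_distrib, Finset.sum_mul]
  congr 1
  · exact Finset.sum_congr rfl fun i _ => by ring
  · rw [Finset.sum_eq_single j]
    · simp [pderiv_X_self]
    · intro i _ hij
      simp [pderiv_X_of_ne (Ne.symm hij)]
    · simp

/-- Key chain rule: derivative of `eval (φ t) q` along a solution is `eval (φ t) (lieD f q)`. -/
lemma eval_deriv {n : ℕ} {f : Fin n → MvPolynomial (Fin n) ℝ} {T : ℝ}
    {φ : ℝ → (Fin n → ℝ)} (hsol : IsSol f T φ) (q : MvPolynomial (Fin n) ℝ)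
    {t : ℝ} (ht : t ∈ Icc (0 : ℝ) T) :
    HasDerivWithinAt (fun s => eval (φ s) q) (eval (φ t) (lieD f q)) (Icc (0 : ℝ) T) t := by
  induction q using MvPolynomial.induction_on with
  | C a => simpa [lieD_C] using (hasDerivWithinAt_const t (Icc (0:ℝ) T) (a : ℝ))
  | add p q hp hq => simpa [lieD_add] using hp.fun_add hq
  | mul_X p j hp =>
    have hφj : HasDerivWithinAt (fun s => φ s j) (eval (φ t) (f j)) (Icc (0 : ℝ) T) t :=
      (hasDerivWithinAt_pi.mp (hsol t ht)) j
    have := hp.fun_mul hφj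
    simpa [lieD_mul_X, mul_comm, mul_assoc, mul_left_comm] using this

/-- Soundness of the differential radical invariant rule (dRI). -/
theorem dRI_sound {n : ℕ} (hn : 1 ≤ n) (f : Fin n → MvPolynomial (Fin n) ℝ)
    (Q : Set (Fin n → ℝ)) (p : MvPolynomial (Fin n) ℝ)
    (N : ℕ) (hN : 1 ≤ N) (g : ℕ → MvPolynomial (Fin n) ℝ)
    (hrank : ∀ x ∈ Q,
      eval x ((lieD f)^[N] p) = ∑ i ∈ Finset.range N, eval x (g i) * eval x ((lieD f)^[i] p))
    (T : ℝ) (hT : 0 ≤ T) (φ : ℝ → (Fin n → ℝ))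
    (hsol : IsSol f T φ) (hQ : ∀ t ∈ Icc (0 : ℝ) T, φ t ∈ Q)
    (h0 : ∀ i < N, eval (φ 0) ((lieD f)^[i] p) = 0) :
    ∀ t ∈ Icc (0 : ℝ) T, eval (φ t) p = 0 := by
  classical
  -- the vector of Lie derivatives
  set Y : ℝ → (Fin N → ℝ) := fun t i => eval (φ t) ((lieD f)^[(i : ℕ)] p) with hY
  -- projection onto [0,T]
  set π : ℝ → ℝ := fun t => max 0 (min t T) with hπ
  have hπmem : ∀ t, π t ∈ Icc (0 : ℝ) T := fun t =>
    ⟨le_max_left _ _, max_le (by linarith [min_le_right t T]) (min_le_right t T)⟩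
  have hπid : ∀ t ∈ Icc (0 : ℝ) T, π t = t := fun t ht => by
    simp [hπ, min_eq_left ht.2, max_eq_right ht.1]
  -- the (clamped) linear vector field
  set v : ℝ → (Fin N → ℝ) → (Fin N → ℝ) := fun t z i =>
    if h : (i : ℕ) + 1 < N then z ⟨(i : ℕ) + 1, h⟩
    else ∑ j : Fin N, eval (φ (π t)) (g j) * z j with hv
  -- bound on coefficients
  obtain ⟨Cb, hCb⟩ : ∃ Cb : ℝ, ∀ t ∈ Icc (0:ℝ) T, (∑ j : Fin N, |eval (φ t) (g j)|) ≤ Cb := by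
    have hφc : ContinuousOn φ (Icc (0:ℝ) T) := fun t ht => (hsol t ht).continuousWithinAt
    have hc : ContinuousOn (fun t => ∑ j : Fin N, |eval (φ t) (g j)|) (Icc (0:ℝ) T) := by
      apply continuousOn_finset_sum
      intro j _
      exact ((MvPolynomial.continuous_eval (g j)).comp_continuousOn hφc).abs
    exact (isCompact_Icc.exists_bound_of_continuousOn hc).imp
      (fun C hC t ht => (le_abs_self _).trans (hC t ht))
  set K : NNReal := (max 1 Cb).toNNReal with hK
  have hK1 : (1 : ℝ) ≤ K := by
    rw [hK, Real.coe_toNNReal _ (le_trans zero_le_one (le_max_left 1 Cb))]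
    exact le_max_left _ _
  have hKC : Cb ≤ K := by
    rw [hK, Real.coe_toNNReal _ (le_trans zero_le_one (le_max_left 1 Cb))]
    exact le_max_right _ _
  -- Lipschitz bound
  have hlip : ∀ t, LipschitzWith K (v t) := by
    intro t
    apply LipschitzWith.of_dist_le_mul
    intro z z'
    rw [dist_pi_le_iff (by positivity)]
    intro i
    by_cases h : (i : ℕ) + 1 < N
    · simp only [hv, dif_pos h]
      calc dist (z ⟨(i:ℕ)+1, h⟩) (z' ⟨(i:ℕ)+1, h⟩) ≤ dist z z' := dist_le_pi_dist z z' _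
        _ ≤ K * dist z z' := le_mul_of_one_le_left dist_nonneg hK1
    · simp only [hv, dif_neg h]
      rw [Real.dist_eq, ← Finset.sum_sub_distrib]
      calc |∑ j : Fin N, (eval (φ (π t)) (g j) * z j - eval (φ (π t)) (g j) * z' j)|
          ≤ ∑ j : Fin N, |eval (φ (π t)) (g j) * z j - eval (φ (π t)) (g j) * z' j| :=
            Finset.abs_sum_le_sum_abs _ _
        _ = ∑ j : Fin N, |eval (φ (π t)) (g j)| * |z j - z' j| := by
            simp [← mul_sub, abs_mul]
        _ ≤ ∑ j : Fin N, |eval (φ (π t)) (g j)| * dist z z' := by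
            apply Finset.sum_le_sum
            intro j _
            exact mul_le_mul_of_nonneg_left
              (by rw [← Real.dist_eq]; exact dist_le_pi_dist z z' j) (abs_nonneg _)
        _ = (∑ j : Fin N, |eval (φ (π t)) (g j)|) * dist z z' := by
            rw [Finset.sum_mul]
        _ ≤ K * dist z z' := by
            apply mul_le_mul_of_nonneg_right _ dist_nonneg
            exact le_trans (hCb _ (hπmem t)) hKC
  -- Y solves the ODE
  have hY' : ∀ t ∈ Icc (0:ℝ) T, HasDerivWithinAt Y (v t (Y t)) (Icc (0:ℝ) T) t := by
    intro t ht
    rw [hasDerivWithinAt_pi]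
    intro i
    have hd : HasDerivWithinAt (fun s => eval (φ s) ((lieD f)^[(i:ℕ)] p))
        (eval (φ t) ((lieD f)^[(i:ℕ)+1] p)) (Icc (0:ℝ) T) t := by
      rw [Function.iterate_succ_apply' (lieD f) (i:ℕ) p]
      exact eval_deriv hsol _ ht
    by_cases h : (i : ℕ) + 1 < N
    · refine hd.congr_deriv (Eq.symm ?_)
      simp [hv, hY, h]
    · have hi : (i : ℕ) + 1 = N := by omega
      refine hd.congr_deriv (Eq.symm ?_)
      simp only [hv, hY, dif_neg h]
      rw [hπid t ht, hi, hrank (φ t) (hQ t ht), ← Fin.sum_univ_eq_sum_range]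
  -- continuity of Y
  have hYc : ContinuousOn Y (Icc (0:ℝ) T) := fun t ht => (hY' t ht).continuousWithinAt
  -- zero is also a solution
  have hv0 : ∀ t, v t 0 = 0 := by
    intro t
    funext i
    by_cases h : (i : ℕ) + 1 < N <;> simp [hv, h]
  -- apply Gronwall
  have key : ∀ t ∈ Icc (0:ℝ) T, dist (Y t) (0 : Fin N → ℝ) ≤ 0 * Real.exp (K * (t - 0)) := by
    apply dist_le_of_trajectories_ODE hlip hYc
    · intro t ht
      exact (hY' t (Ico_subset_Icc_self ht)).mono_of_mem_nhdsWithin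
        (Icc_mem_nhdsGE_of_mem ht)
    · exact continuousOn_const
    · intro t ht
      rw [hv0]
      exact hasDerivWithinAt_const _ _ _
    · have : Y 0 = 0 := by
        funext i
        exact h0 (i : ℕ) i.2
      simp [this]
  intro t ht
  have := key t ht
  rw [zero_mul, dist_le_zero] at this
  have := congrFun this ⟨0, hN⟩
  simpa [hY] using this
end

section
/- Local progress for strict polynomial inequalities (LP>*): Let f be a polynomial vector field on ℝⁿ and let p be a polynomial with rank N with respect to f. If ω ∈ ℝⁿ satisfies the strict progress predicate Prog>_f(p)(ω), then there exist T > 0 and a solution φ : [0,T] → ℝⁿ of x' = f(x) with φ(0) = ω and p(φ(t)) > 0 for all t ∈ (0,T]. -/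
open MvPolynomial Set Filter Topology

/-- `N` is a rank of `p` with respect to `f`. -/
def IsRank {n : ℕ} (f : Fin n → MvPolynomial (Fin n) ℝ)
    (p : MvPolynomial (Fin n) ℝ) (N : ℕ) : Prop :=
  1 ≤ N ∧ ∃ g : ℕ → MvPolynomial (Fin n) ℝ,
    (lieD f)^[N] p = ∑ i ∈ Finset.range N, g i * (lieD f)^[i] p

/-- Strict progress predicate: the first significant Lie derivative is positive. -/
def ProgGt {n : ℕ} (f : Fin n → MvPolynomial (Fin n) ℝ)
    (p : MvPolynomial (Fin n) ℝ) (N : ℕ) (ω : Fin n → ℝ) : Prop :=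
  ∃ k < N, (∀ j < k, eval ω ((lieD f)^[j] p) = 0) ∧ 0 < eval ω ((lieD f)^[k] p)

/-- Weak progress predicate. -/
def ProgGe {n : ℕ} (f : Fin n → MvPolynomial (Fin n) ℝ)
    (p : MvPolynomial (Fin n) ℝ) (N : ℕ) (ω : Fin n → ℝ) : Prop :=
  ProgGt f p N ω ∨ ∀ i < N, eval ω ((lieD f)^[i] p) = 0

lemma eval_lieD {n : ℕ} (f : Fin n → MvPolynomial (Fin n) ℝ)
    (q : MvPolynomial (Fin n) ℝ) (x : Fin n → ℝ) :
    eval x (lieD f q) = ∑ i, eval x (pderiv i q) * eval x (f i) := by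
  simp [lieD]

lemma hasDerivWithinAt_eval_comp {n : ℕ} {φ : ℝ → Fin n → ℝ} {d : Fin n → ℝ}
    {s : Set ℝ} {t : ℝ} (hφ : HasDerivWithinAt φ d s t) (q : MvPolynomial (Fin n) ℝ) :
    HasDerivWithinAt (fun u => eval (φ u) q) (∑ i, eval (φ t) (pderiv i q) * d i) s t := by
  induction q using MvPolynomial.induction_on with
  | C a =>
      have : (∑ i, eval (φ t) (pderiv i (C a : MvPolynomial (Fin n) ℝ)) * d i) = 0 := by
        simp [pderiv_C]
      rw [this]
      simpa using hasDerivWithinAt_const t s (a : ℝ)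
  | add p q hp hq =>
      have : HasDerivWithinAt (fun u => eval (φ u) p + eval (φ u) q) _ s t := hp.add hq
      simpa [Finset.sum_add_distrib, add_mul] using this
  | mul_X p i hp =>
      have hi : HasDerivWithinAt (fun u => φ u i) (d i) s t := hasDerivWithinAt_pi.mp hφ i
      have key : HasDerivWithinAt (fun u => eval (φ u) p * φ u i) _ s t := hp.mul hi
      have hfun : (fun u => eval (φ u) (p * X i)) = fun u => eval (φ u) p * φ u i := by
        funext u; simp
      rw [hfun]
      convert key using 1
      classical
      rw [Finset.sum_mul]
      have : ∀ j, eval (φ t) (pderiv j (p * X i)) * d j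
          = eval (φ t) (pderiv j p) * φ t i * d j
            + (if j = i then eval (φ t) p * d j else 0) := by
        intro j
        rw [pderiv_mul, pderiv_X]
        by_cases h : j = i <;> simp [h, Pi.single_apply, add_mul] <;> ring
      rw [Finset.sum_congr rfl fun j _ => this j, Finset.sum_add_distrib,
        Finset.sum_ite_eq' Finset.univ i (fun j => eval (φ t) p * d j)]
      simp only [Finset.mem_univ, if_true]
      congr 1
      exact Finset.sum_congr rfl fun j _ => by ring

lemma hasDerivWithinAt_lieD_comp {n : ℕ} {f : Fin n → MvPolynomial (Fin n) ℝ}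
    {φ : ℝ → Fin n → ℝ} {s : Set ℝ} {t : ℝ}
    (hφ : HasDerivWithinAt φ (fun i => eval (φ t) (f i)) s t) (q : MvPolynomial (Fin n) ℝ) :
    HasDerivWithinAt (fun u => eval (φ u) q) (eval (φ t) (lieD f q)) s t := by
  rw [eval_lieD]
  exact hasDerivWithinAt_eval_comp hφ q

/-- Local progress for strict polynomial inequalities (LP>*). -/
theorem LP_gt {n : ℕ} (hn : 1 ≤ n) (f : Fin n → MvPolynomial (Fin n) ℝ)
    (p : MvPolynomial (Fin n) ℝ) (N : ℕ) (hN : IsRank f p N)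
    (ω : Fin n → ℝ) (hprog : ProgGt f p N ω) :
    ∃ T : ℝ, 0 < T ∧ ∃ φ : ℝ → (Fin n → ℝ), IsSol f T φ ∧ φ 0 = ω ∧
      ∀ t ∈ Ioc (0 : ℝ) T, 0 < eval (φ t) p := by
  obtain ⟨k, hkN, hzero, hpos⟩ := hprog
  -- The vector field is C¹
  have hFC : ContDiffAt ℝ 1 (fun x : Fin n → ℝ => fun i => eval x (f i)) ω := by
    have : ContDiff ℝ 1 (fun x : Fin n → ℝ => fun i => eval x (f i)) := by
      refine contDiff_pi.mpr fun i => ?_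
      have ha := AnalyticOnNhd.eval_mvPolynomial (𝕜 := ℝ) (f i)
      exact contDiff_iff_contDiffAt.mpr fun x => ((ha x (mem_univ x)).contDiffAt).of_le le_top
    exact this.contDiffAt
  obtain ⟨ε, hε, a, r, L, K, hr, hpl'⟩ := IsPicardLindelof.of_contDiffAt_one hFC
  have hpl := hpl' 0
  obtain ⟨φ, hφ0', hφ⟩ := hpl.exists_eq_forall_mem_Icc_hasDerivWithinAt (Metric.mem_closedBall_self hr.le)
  have hφ0 : φ 0 = ω := hφ0'
  rw [zero_sub, zero_add] at hφ
  -- derivatives of the Lie derivative chain along the solution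
  have hderiv : ∀ (j : ℕ), ∀ t ∈ Icc (-ε) ε,
      HasDerivWithinAt (fun u => eval (φ u) ((lieD f)^[j] p))
        (eval (φ t) ((lieD f)^[j + 1] p)) (Icc (-ε) ε) t := by
    intro j t ht
    rw [Function.iterate_succ_apply']
    exact hasDerivWithinAt_lieD_comp (hφ t ht) ((lieD f)^[j] p)
  -- continuity of the k-th Lie derivative at 0 and positivity nearby
  have h0mem : (0 : ℝ) ∈ Icc (-ε) ε := ⟨by linarith, by linarith⟩
  have hca : ContinuousAt (fun u => eval (φ u) ((lieD f)^[k] p)) 0 :=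
    ((hderiv k 0 h0mem).hasDerivAt (Icc_mem_nhds (by linarith) (by linarith))).continuousAt
  have hpos0 : 0 < eval (φ 0) ((lieD f)^[k] p) := by rw [hφ0]; exact hpos
  have hev : ∀ᶠ u in 𝓝 (0 : ℝ), 0 < eval (φ u) ((lieD f)^[k] p) :=
    hca.eventually (lt_mem_nhds hpos0)
  obtain ⟨δ, hδ, hball⟩ := Metric.eventually_nhds_iff.mp hev
  set T : ℝ := min (δ / 2) ε with hT
  have hT0 : 0 < T := lt_min (by linarith) hε
  have hsub : Icc (0 : ℝ) T ⊆ Icc (-ε) ε := by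
    intro t ht
    have h1 : (0:ℝ) ≤ t := ht.1
    have h2 : t ≤ ε := le_trans ht.2 (min_le_right _ _)
    exact ⟨by linarith, h2⟩
  have hkpos : ∀ t ∈ Icc (0 : ℝ) T, 0 < eval (φ t) ((lieD f)^[k] p) := by
    intro t ht
    apply hball
    have h1 : t ≤ δ / 2 := le_trans ht.2 (min_le_left _ _)
    have h2 : (0 : ℝ) ≤ t := ht.1
    rw [Real.dist_eq, sub_zero, abs_of_nonneg h2]
    linarith
  -- downward induction
  have claim : ∀ m : ℕ, m ≤ k → ∀ t ∈ Ioc (0 : ℝ) T, 0 < eval (φ t) ((lieD f)^[k - m] p) := by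
    intro m
    induction m with
    | zero => intro _ t ht; simpa using hkpos t ⟨le_of_lt ht.1, ht.2⟩
    | succ m ih =>
        intro hm t ht
        have hmk : m ≤ k := le_of_lt (Nat.lt_of_succ_le hm)
        set j := k - (m + 1) with hj
        have hjk : j < k := by omega
        have hjsucc : j + 1 = k - m := by omega
        have hj0 : eval (φ 0) ((lieD f)^[j] p) = 0 := by
          rw [hφ0]; exact hzero j hjk
        have hmono : StrictMonoOn (fun u => eval (φ u) ((lieD f)^[j] p)) (Icc 0 T) := by
          apply strictMonoOn_of_hasDerivWithinAt_pos (convex_Icc 0 T)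
            (f' := fun u => eval (φ u) ((lieD f)^[j + 1] p))
          · intro u hu
            exact ((hderiv j u (hsub hu)).mono hsub).continuousWithinAt
          · intro u hu
            rw [interior_Icc] at hu
            exact ((hderiv j u (hsub (Ioo_subset_Icc_self hu))).mono
              ((interior_Icc (a := (0:ℝ)) (b := T)).symm ▸
                ((Ioo_subset_Icc_self).trans hsub))).mono_of_mem_nhdsWithin
              (by rw [interior_Icc]; exact self_mem_nhdsWithin)
          · intro u hu
            rw [interior_Icc] at hu
            have := ih hmk u ⟨hu.1, le_of_lt hu.2⟩
            rwa [hjsucc]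
        have := hmono (left_mem_Icc.mpr (le_of_lt hT0)) ⟨le_of_lt ht.1, ht.2⟩ ht.1
        simpa [hj0] using this
  refine ⟨T, hT0, φ, ?_, hφ0, ?_⟩
  · intro t ht
    exact (hφ t (hsub ht)).mono hsub
  · intro t ht
    have := claim k le_rfl t ht
    simpa using this
end

section
/- Semialgebraic invariant characterization (soundness and completeness of sAI): Let f be a polynomial vector field on ℝⁿ. Let P ⊆ ℝⁿ be given in normal form by polynomials p_{ij} (0 ≤ i ≤ M, 0 ≤ j ≤ m(i)) and q_{ij} (0 ≤ i ≤ M, 0 ≤ j ≤ n(i)), i.e., P = { x : ∃ i ≤ M, ∀ j ≤ m(i), p_{ij}(x) ≥ 0 and ∀ j ≤ n(i), q_{ij}(x) > 0 }, and let the complement ℝⁿ \ P be given in normal form by polynomials r_{ij} (0 ≤ i ≤ M', 0 ≤ j ≤ a(i)) and s_{ij} (0 ≤ i ≤ M', 0 ≤ j ≤ b(i)). Fix ranks of the p_{ij}, q_{ij} with respect to f and of the r_{ij}, s_{ij} with respect to −f. Then the following are equivalent: (a) P is an invariant of x' = f(x), i.e., for every ω ∈ P, every T ≥ 0, and every solution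 φ : [0,T] → ℝⁿ of x' = f(x) with φ(0) = ω, one has φ(t) ∈ P for all t ∈ [0,T]; (b) for every x ∈ P there exists i ≤ M with Prog≥_f(p_{ij})(x) for all j ≤ m(i) and Prog>_f(q_{ij})(x) for all j ≤ n(i), and for every x ∉ P there exists i ≤ M' with Prog≥_{−f}(r_{ij})(x) for all j ≤ a(i) and Prog>_{−f}(s_{ij})(x) for all j ≤ b(i). -/
open MvPolynomial Set

/-! ### Auxiliary lemmas -/

theorem eval_hasDerivWithinAt {n : ℕ} {φ : ℝ → Fin n → ℝ} {d : Fin n → ℝ} {s : Set ℝ} {t : ℝ}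
    (hφ : HasDerivWithinAt φ d s t) (p : MvPolynomial (Fin n) ℝ) :
    HasDerivWithinAt (fun u => eval (φ u) p) (∑ i, eval (φ t) (pderiv i p) * d i) s t := by
  induction p using MvPolynomial.induction_on with
  | C a =>
      simpa [pderiv_C] using (hasDerivWithinAt_const t s (a : ℝ))
  | add p q hp hq =>
      have e : ∑ i, eval (φ t) (pderiv i (p + q)) * d i =
          ∑ i, eval (φ t) (pderiv i p) * d i + ∑ i, eval (φ t) (pderiv i q) * d i := by
        simp [map_add, add_mul, Finset.sum_add_distrib]
      rw [e]; simp only [map_add]; exact hp.add hq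
  | mul_X p j hp =>
      have hXj : HasDerivWithinAt (fun u => φ u j) (d j) s t :=
        (hasDerivWithinAt_pi.1 hφ) j
      have e : ∑ i, eval (φ t) (pderiv i (p * X j)) * d i =
          (∑ i, eval (φ t) (pderiv i p) * d i) * φ t j + eval (φ t) p * d j := by
        simp only [pderiv_mul, map_add, pderiv_X, eval_mul, eval_X, map_mul, add_mul,
          Finset.sum_add_distrib, Finset.sum_mul]
        congr 1
        · apply Finset.sum_congr rfl; intro i _; ring
        · simp [Pi.single_apply, apply_ite, Finset.sum_ite_eq', mul_comm]
      rw [e]; simp only [map_mul, eval_X]; exact hp.mul hXj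

theorem lie_chain {n : ℕ} {f : Fin n → MvPolynomial (Fin n) ℝ} {φ : ℝ → Fin n → ℝ}
    {s : Set ℝ} {t : ℝ}
    (hφ : HasDerivWithinAt φ (fun i => eval (φ t) (f i)) s t) (p : MvPolynomial (Fin n) ℝ) :
    HasDerivWithinAt (fun u => eval (φ u) p) (eval (φ t) (lieD f p)) s t := by
  have := eval_hasDerivWithinAt hφ p
  convert this using 1
  simp [lieD, map_sum]

theorem sol_chain {n : ℕ} {v : Fin n → MvPolynomial (Fin n) ℝ} {T : ℝ} {φ : ℝ → Fin n → ℝ}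
    (hsol : IsSol v T φ) (p : MvPolynomial (Fin n) ℝ) :
    ∀ j, ∀ t ∈ Icc (0:ℝ) T, HasDerivWithinAt (fun u => eval (φ u) ((lieD v)^[j] p))
      (eval (φ t) ((lieD v)^[j+1] p)) (Icc (0:ℝ) T) t := by
  intro j t ht
  have := lie_chain (hsol t ht) ((lieD v)^[j] p)
  simpa [Function.iterate_succ_apply'] using this

theorem IsSol.shift {n : ℕ} {f : Fin n → MvPolynomial (Fin n) ℝ} {T : ℝ} {φ : ℝ → Fin n → ℝ}
    (h : IsSol f T φ) {t₀ : ℝ} (ht₀ : t₀ ∈ Icc 0 T) :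
    IsSol f (T - t₀) (fun s => φ (t₀ + s)) := by
  intro t ht
  have hmem : t₀ + t ∈ Icc 0 T := ⟨by linarith [ht.1, ht₀.1], by linarith [ht.2]⟩
  have hmaps : MapsTo (fun s => t₀ + s) (Icc 0 (T - t₀)) (Icc 0 T) := by
    intro u hu; simp only [mem_Icc] at hu ⊢; constructor <;> linarith [ht₀.1, ht₀.2, hu.1, hu.2]
  have hinner : HasDerivWithinAt (fun s : ℝ => t₀ + s) 1 (Icc 0 (T - t₀)) t :=
    ((hasDerivAt_id t).const_add t₀).hasDerivWithinAt
  have := HasDerivWithinAt.scomp t (h (t₀ + t) hmem) hinner hmaps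
  rw [one_smul] at this
  exact this

theorem IsSol.reverse {n : ℕ} {f : Fin n → MvPolynomial (Fin n) ℝ} {T : ℝ} {φ : ℝ → Fin n → ℝ}
    (h : IsSol f T φ) {t₀ : ℝ} (ht₀ : t₀ ∈ Icc 0 T) :
    IsSol (fun l => -f l) t₀ (fun s => φ (t₀ - s)) := by
  intro t ht
  have hmem : t₀ - t ∈ Icc 0 T := ⟨by linarith [ht.2], by linarith [ht.1, ht₀.2]⟩
  have hmaps : MapsTo (fun s => t₀ - s) (Icc 0 t₀) (Icc 0 T) := by
    intro u hu; simp only [mem_Icc] at hu ⊢; constructor <;> linarith [ht₀.1, ht₀.2, hu.1, hu.2]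
  have hinner : HasDerivWithinAt (fun s : ℝ => t₀ - s) (-1) (Icc 0 t₀) t :=
    ((hasDerivAt_id t).neg.const_add t₀).hasDerivWithinAt
  have := HasDerivWithinAt.scomp t (h (t₀ - t) hmem) hinner hmaps
  have e : (fun i => eval (φ (t₀ - t)) (-f i)) = (-1:ℝ) • fun i => eval (φ (t₀ - t)) (f i) := by
    funext i
    simp
  show HasDerivWithinAt _ (fun i => eval (φ (t₀ - t)) (-f i)) _ _
  rw [e]
  exact this

theorem pos_after (k : ℕ) : ∀ (g : ℕ → ℝ → ℝ) (T : ℝ), 0 < T →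
    (∀ j, ∀ t ∈ Icc (0:ℝ) T, HasDerivWithinAt (g j) (g (j+1) t) (Icc (0:ℝ) T) t) →
    (∀ j < k, g j 0 = 0) → 0 < g k 0 →
    ∃ c, 0 < c ∧ c ≤ T ∧ ∀ t ∈ Ioc (0:ℝ) c, 0 < g 0 t := by
  induction k with
  | zero =>
      intro g T hT hd h0 hk
      have hc : ContinuousWithinAt (g 0) (Icc 0 T) 0 :=
        (hd 0 0 (left_mem_Icc.2 hT.le)).continuousWithinAt
      have hmem : {t : ℝ | 0 < g 0 t} ∈ nhdsWithin 0 (Icc 0 T) := by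
        have := hc (Ioi_mem_nhds hk)
        simpa [preimage] using this
      rw [mem_nhdsWithin] at hmem
      obtain ⟨U, hU, h0U, hsub⟩ := hmem
      obtain ⟨δ, hδ, hball⟩ := Metric.mem_nhds_iff.1 (hU.mem_nhds h0U)
      refine ⟨min (δ/2) T, lt_min (by linarith) hT, min_le_right _ _, fun t ht => ?_⟩
      apply hsub
      refine ⟨hball ?_, ht.1.le, le_trans ht.2 (min_le_right _ _)⟩
      have : |t| < δ := by
        rw [abs_of_pos ht.1]
        exact lt_of_le_of_lt (le_trans ht.2 (min_le_left _ _)) (by linarith)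
      simpa [Real.dist_eq] using this
  | succ k ih =>
      intro g T hT hd h0 hk
      obtain ⟨c, hc, hcT, hpos⟩ := ih (fun j => g (j+1)) T hT (fun j => hd (j+1))
        (fun j hj => h0 (j+1) (by omega)) hk
      have hmono : StrictMonoOn (g 0) (Icc 0 c) := by
        apply strictMonoOn_of_deriv_pos (convex_Icc 0 c)
        · intro t ht
          exact ((hd 0 t ⟨ht.1, ht.2.trans hcT⟩).continuousWithinAt).mono
            (Icc_subset_Icc le_rfl hcT)
        · intro t ht
          rw [interior_Icc] at ht
          have hda : HasDerivAt (g 0) (g 1 t) t := by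
            apply (hd 0 t ⟨ht.1.le, (ht.2.le.trans hcT)⟩).hasDerivAt
            exact Icc_mem_nhds (by linarith [ht.1]) (by linarith [lt_of_lt_of_le ht.2 hcT])
          rw [hda.deriv]
          exact hpos t ⟨ht.1, ht.2.le⟩
      refine ⟨c, hc, hcT, fun t ht => ?_⟩
      have := hmono (left_mem_Icc.2 hc.le) ⟨ht.1.le, ht.2⟩ ht.1
      rwa [h0 0 (by omega)] at this

theorem zero_of_rank {n N : ℕ} (hN : 1 ≤ N) {v : Fin n → MvPolynomial (Fin n) ℝ}
    {p : MvPolynomial (Fin n) ℝ} {g : ℕ → MvPolynomial (Fin n) ℝ}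
    (hrank : (lieD v)^[N] p = ∑ i ∈ Finset.range N, g i * (lieD v)^[i] p)
    {T : ℝ} {φ : ℝ → Fin n → ℝ} (hsol : IsSol v T φ)
    (h0 : ∀ j < N, eval (φ 0) ((lieD v)^[j] p) = 0) :
    ∀ t ∈ Icc (0:ℝ) T, ∀ j < N, eval (φ t) ((lieD v)^[j] p) = 0 := by
  intro t' ht' j' hj'
  have hT : (0:ℝ) ≤ T := le_trans ht'.1 ht'.2
  set h : ℕ → ℝ → ℝ := fun j t => eval (φ t) ((lieD v)^[j] p) with hh
  have hd : ∀ j, ∀ t ∈ Icc (0:ℝ) T, HasDerivWithinAt (h j) (h (j+1) t) (Icc (0:ℝ) T) t := by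
    intro j t ht
    have := lie_chain (hsol t ht) ((lieD v)^[j] p)
    simpa [hh, Function.iterate_succ_apply'] using this
  set ρ : ℝ → ℝ := fun t => max 0 (min t T) with hρ
  have hρc : Continuous ρ := continuous_const.max (continuous_id.min continuous_const)
  have hρmem : ∀ t, ρ t ∈ Icc (0:ℝ) T := fun t =>
    ⟨le_max_left _ _, max_le hT (min_le_right _ _)⟩
  have hρid : ∀ t ∈ Icc (0:ℝ) T, ρ t = t := by
    intro t ht; simp [hρ, min_eq_left ht.2, max_eq_right ht.1]
  have hφc : ContinuousOn φ (Icc 0 T) := fun u hu => (hsol u hu).continuousWithinAt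
  set G : ℝ → (Fin N → ℝ) := fun u i => eval (φ u) (g i) with hG
  have hGc : ContinuousOn G (Icc 0 T) := by
    apply continuousOn_pi.2
    intro i
    exact (((g i).continuous_eval ).comp_continuousOn hφc)
  obtain ⟨C₀, hC₀⟩ := (isCompact_Icc (a := (0:ℝ)) (b := T)).exists_bound_of_continuousOn hGc
  set C : ℝ := max C₀ 0 with hC
  have hCnn : 0 ≤ C := le_max_right _ _
  have hbound : ∀ u ∈ Icc (0:ℝ) T, ∀ i : Fin N, |eval (φ u) (g i)| ≤ C := by
    intro u hu i
    calc |eval (φ u) (g i)| = ‖G u i‖ := rfl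
    _ ≤ ‖G u‖ := norm_le_pi_norm (G u) i
    _ ≤ C₀ := hC₀ u hu
    _ ≤ C := le_max_left _ _
  set w : ℝ → (Fin N → ℝ) → (Fin N → ℝ) := fun t z j =>
    if hj : (j:ℕ)+1 < N then z ⟨(j:ℕ)+1, hj⟩
    else ∑ i : Fin N, eval (φ (ρ t)) (g (i:ℕ)) * z i with hw
  set K : NNReal := Real.toNNReal (1 + N * C) with hK
  have hK1 : (1:ℝ) ≤ (K:ℝ) := by
    rw [hK, Real.coe_toNNReal _ (by positivity)]
    nlinarith [hCnn]
  have hlip : ∀ t, LipschitzWith K (w t) := by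
    intro t
    apply LipschitzWith.of_dist_le_mul
    intro z z'
    rw [dist_pi_le_iff (by positivity)]
    intro j
    by_cases hj : (j:ℕ)+1 < N
    · simp only [hw, hj, dif_pos]
      calc dist (z ⟨(j:ℕ)+1, hj⟩) (z' ⟨(j:ℕ)+1, hj⟩) ≤ dist z z' := dist_le_pi_dist z z' _
      _ ≤ K * dist z z' := le_mul_of_one_le_left dist_nonneg hK1
    · simp only [hw, hj, dif_neg, not_false_iff]
      rw [Real.dist_eq]
      have : (∑ i : Fin N, eval (φ (ρ t)) (g (i:ℕ)) * z i)
            - (∑ i : Fin N, eval (φ (ρ t)) (g (i:ℕ)) * z' i)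
          = ∑ i : Fin N, eval (φ (ρ t)) (g (i:ℕ)) * (z i - z' i) := by
        rw [← Finset.sum_sub_distrib]; apply Finset.sum_congr rfl; intro i _; ring
      rw [this]
      calc |∑ i : Fin N, eval (φ (ρ t)) (g (i:ℕ)) * (z i - z' i)|
          ≤ ∑ i : Fin N, |eval (φ (ρ t)) (g (i:ℕ)) * (z i - z' i)| :=
            Finset.abs_sum_le_sum_abs _ _
        _ ≤ ∑ _i : Fin N, C * dist z z' := by
            apply Finset.sum_le_sum
            intro i _
            rw [abs_mul]
            apply mul_le_mul (hbound _ (hρmem t) i) ?_ (abs_nonneg _) hCnn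
            rw [← Real.dist_eq]
            exact dist_le_pi_dist z z' i
        _ = N * C * dist z z' := by rw [Finset.sum_const, Finset.card_univ, Fintype.card_fin]; ring
        _ ≤ K * dist z z' := by
            apply mul_le_mul_of_nonneg_right ?_ dist_nonneg
            rw [hK, Real.coe_toNNReal _ (by positivity)]; linarith
  set y : ℝ → (Fin N → ℝ) := fun t j => h (j:ℕ) t with hy
  have hyd : ∀ t ∈ Ico (0:ℝ) T, HasDerivWithinAt y (w t (y t)) (Ici t) t := by
    intro t ht
    have htI : t ∈ Icc (0:ℝ) T := ⟨ht.1, ht.2.le⟩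
    have hder : HasDerivWithinAt y (fun j => h ((j:ℕ)+1) t) (Icc (0:ℝ) T) t :=
      hasDerivWithinAt_pi.2 fun j => hd (j:ℕ) t htI
    have heq : w t (y t) = fun j : Fin N => h ((j:ℕ)+1) t := by
      funext j
      by_cases hj : (j:ℕ)+1 < N
      · simp [hw, hj, hy]
      · have hjN : (j:ℕ)+1 = N := by omega
        simp only [hw, hj, dif_neg, not_false_iff]
        rw [hρid t htI]
        have : ∑ i : Fin N, eval (φ t) (g (i:ℕ)) * y t i
            = eval (φ t) (∑ i ∈ Finset.range N, g i * (lieD v)^[i] p) := by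
          rw [map_sum, Finset.sum_range (fun i => eval (φ t) (g i * (lieD v)^[i] p))]
          apply Finset.sum_congr rfl
          intro i _
          rw [map_mul]
        rw [this, ← hrank, hjN]
    rw [heq]
    apply hder.mono_of_mem_nhdsWithin
    apply Filter.mem_of_superset (Icc_mem_nhdsGE_of_mem ⟨le_rfl, ht.2⟩)
    exact Icc_subset_Icc ht.1 le_rfl
  have hzd : ∀ t ∈ Ico (0:ℝ) T, HasDerivWithinAt (fun _ : ℝ => (0 : Fin N → ℝ))
      (w t 0) (Ici t) t := by
    intro t ht
    have : w t 0 = 0 := by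
      funext j
      by_cases hj : (j:ℕ)+1 < N <;> simp [hw, hj]
    rw [this]
    exact hasDerivWithinAt_const t _ 0
  have hyc : ContinuousOn y (Icc 0 T) := by
    apply continuousOn_pi.2
    intro j u hu
    exact (hd (j:ℕ) u hu).continuousWithinAt
  have huniq : EqOn y (fun _ => (0 : Fin N → ℝ)) (Icc 0 T) := by
    apply ODE_solution_unique_of_mem_Icc_right (v := w) (s := fun _ => univ)
      (fun t _ => (hlip t).lipschitzOnWith) hyc hyd (fun _ _ => mem_univ _)
      continuousOn_const hzd (fun _ _ => mem_univ _)
    funext j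
    exact h0 (j:ℕ) j.2
  have := congrFun (huniq ht') ⟨j', hj'⟩
  simpa [hy, hh] using this

theorem sol_exists {n : ℕ} (v : Fin n → MvPolynomial (Fin n) ℝ) (x : Fin n → ℝ) :
    ∃ ε > (0:ℝ), ∃ φ : ℝ → Fin n → ℝ, φ 0 = x ∧ IsSol v ε φ := by
  have hF : ContDiff ℝ 1 (fun y : Fin n → ℝ => fun i => eval y (v i)) := by
    apply contDiff_pi.2
    intro i
    exact (AnalyticOnNhd.eval_mvPolynomial (v i)).contDiff
  obtain ⟨φ, hφ0, ε, hε, hφ⟩ := ContDiffAt.exists_forall_mem_closedBall_exists_eq_forall_mem_Ioo_hasDerivAt₀ (x₀ := x) hF.contDiffAt 0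
  refine ⟨ε/2, by linarith, φ, hφ0, ?_⟩
  intro t ht
  have : t ∈ Ioo (0 - ε) (0 + ε) := ⟨by linarith [ht.1], by linarith [ht.2]⟩
  exact (hφ t this).hasDerivWithinAt

theorem ge_after {n N : ℕ} {v : Fin n → MvPolynomial (Fin n) ℝ} {p : MvPolynomial (Fin n) ℝ}
    (hrank : IsRank v p N) {T : ℝ} (hT : 0 < T) {φ : ℝ → Fin n → ℝ} (hsol : IsSol v T φ)
    (hprog : ProgGe v p N (φ 0)) :
    ∃ c, 0 < c ∧ c ≤ T ∧ ∀ t ∈ Ioc (0:ℝ) c, 0 ≤ eval (φ t) p := by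
  rcases hprog with ⟨k, hkN, hzero, hpos⟩ | hall
  · obtain ⟨c, hc, hcT, h⟩ := pos_after k (fun j u => eval (φ u) ((lieD v)^[j] p)) T hT
      (sol_chain hsol p) hzero hpos
    exact ⟨c, hc, hcT, fun t ht => by simpa using (h t ht).le⟩
  · obtain ⟨g, hg⟩ := hrank.2
    have := zero_of_rank hrank.1 hg hsol hall
    refine ⟨T, hT, le_rfl, fun t ht => ?_⟩
    have h0 := this t ⟨ht.1.le, ht.2⟩ 0 hrank.1
    simpa using h0.ge

theorem gt_after {n N : ℕ} {v : Fin n → MvPolynomial (Fin n) ℝ} {p : MvPolynomial (Fin n) ℝ}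
    {T : ℝ} (hT : 0 < T) {φ : ℝ → Fin n → ℝ} (hsol : IsSol v T φ)
    (hprog : ProgGt v p N (φ 0)) :
    ∃ c, 0 < c ∧ c ≤ T ∧ ∀ t ∈ Ioc (0:ℝ) c, 0 < eval (φ t) p := by
  rcases hprog with ⟨k, hkN, hzero, hpos⟩
  obtain ⟨c, hc, hcT, h⟩ := pos_after k (fun j u => eval (φ u) ((lieD v)^[j] p)) T hT
    (sol_chain hsol p) hzero hpos
  exact ⟨c, hc, hcT, fun t ht => by simpa using h t ht⟩

theorem local_stay {n : ℕ} {v : Fin n → MvPolynomial (Fin n) ℝ} {T : ℝ} (hT : 0 < T)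
    {φ : ℝ → Fin n → ℝ} (hsol : IsSol v T φ)
    (m₀ k₀ : ℕ) (pp qq : ℕ → MvPolynomial (Fin n) ℝ) (Npp Nqq : ℕ → ℕ)
    (hrk : ∀ j ≤ m₀, IsRank v (pp j) (Npp j))
    (hge : ∀ j ≤ m₀, ProgGe v (pp j) (Npp j) (φ 0))
    (hgt : ∀ j ≤ k₀, ProgGt v (qq j) (Nqq j) (φ 0)) :
    ∃ c, 0 < c ∧ c ≤ T ∧ ∀ t ∈ Ioc (0:ℝ) c,
      (∀ j ≤ m₀, 0 ≤ eval (φ t) (pp j)) ∧ (∀ j ≤ k₀, 0 < eval (φ t) (qq j)) := by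
  have H : ∀ j : ℕ, ∃ c, 0 < c ∧ c ≤ T ∧
      (j ≤ m₀ → ∀ t ∈ Ioc (0:ℝ) c, 0 ≤ eval (φ t) (pp j)) ∧
      (j ≤ k₀ → ∀ t ∈ Ioc (0:ℝ) c, 0 < eval (φ t) (qq j)) := by
    intro j
    by_cases h1 : j ≤ m₀
    · obtain ⟨c1, hc1, hc1T, hp1⟩ := ge_after (hrk j h1) hT hsol (hge j h1)
      by_cases h2 : j ≤ k₀
      · obtain ⟨c2, hc2, hc2T, hp2⟩ := gt_after hT hsol (hgt j h2)
        exact ⟨min c1 c2, lt_min hc1 hc2, (min_le_left _ _).trans hc1T,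
          fun _ t ht => hp1 t ⟨ht.1, ht.2.trans (min_le_left _ _)⟩,
          fun _ t ht => hp2 t ⟨ht.1, ht.2.trans (min_le_right _ _)⟩⟩
      · exact ⟨c1, hc1, hc1T, fun _ => hp1, fun h2' => absurd h2' h2⟩
    · by_cases h2 : j ≤ k₀
      · obtain ⟨c2, hc2, hc2T, hp2⟩ := gt_after hT hsol (hgt j h2)
        exact ⟨c2, hc2, hc2T, fun h1' => absurd h1' h1, fun _ => hp2⟩
      · exact ⟨T, hT, le_rfl, fun h1' => absurd h1' h1, fun h2' => absurd h2' h2⟩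
  choose cf hcf0 hcfT hcfp hcfq using H
  set S : Finset ℕ := Finset.range (max m₀ k₀ + 1) with hS
  have hSne : S.Nonempty := ⟨0, by simp [hS]⟩
  set c : ℝ := S.inf' hSne cf with hc
  have hc0 : 0 < c := (Finset.lt_inf'_iff _).2 fun j _ => hcf0 j
  have hcT : c ≤ T := le_trans (Finset.inf'_le cf (by simp [hS])) (hcfT 0)
  refine ⟨c, hc0, hcT, fun t ht => ⟨fun j hj => ?_, fun j hj => ?_⟩⟩
  · have hjS : j ∈ S := by simp [hS]; omega
    exact hcfp j hj t ⟨ht.1, ht.2.trans (Finset.inf'_le cf hjS)⟩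
  · have hjS : j ∈ S := by simp [hS]; omega
    exact hcfq j hj t ⟨ht.1, ht.2.trans (Finset.inf'_le cf hjS)⟩

theorem prog_of_stay {n : ℕ} {v : Fin n → MvPolynomial (Fin n) ℝ}
    (M₀ : ℕ) (m₀ k₀ : ℕ → ℕ) (pp qq : ℕ → ℕ → MvPolynomial (Fin n) ℝ) (Npp Nqq : ℕ → ℕ → ℕ)
    (hrkq : ∀ i ≤ M₀, ∀ j ≤ k₀ i, IsRank v (qq i j) (Nqq i j))
    (x : Fin n → ℝ) {ε : ℝ} (hε : 0 < ε) {φ : ℝ → Fin n → ℝ}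
    (hsol : IsSol v ε φ) (hφ0 : φ 0 = x)
    (hmem : ∀ t ∈ Icc (0:ℝ) ε, ∃ i ≤ M₀, (∀ j ≤ m₀ i, 0 ≤ eval (φ t) (pp i j)) ∧
      (∀ j ≤ k₀ i, 0 < eval (φ t) (qq i j))) :
    ∃ i ≤ M₀, (∀ j ≤ m₀ i, ProgGe v (pp i j) (Npp i j) x) ∧
      (∀ j ≤ k₀ i, ProgGt v (qq i j) (Nqq i j) x) := by
  set Cl : ℕ → ℝ → Prop := fun i t => (∀ j ≤ m₀ i, 0 ≤ eval (φ t) (pp i j)) ∧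
      (∀ j ≤ k₀ i, 0 < eval (φ t) (qq i j)) with hCl
  have key : ∃ i₀, i₀ ≤ M₀ ∧ ∀ δ, 0 < δ → ∃ t, 0 < t ∧ t ≤ δ ∧ t ≤ ε ∧ Cl i₀ t := by
    by_contra hcon
    push_neg at hcon
    have hcon' : ∀ i, ∃ δ, 0 < δ ∧ (i ≤ M₀ → ∀ t, 0 < t → t ≤ δ → t ≤ ε → ¬ Cl i t) := by
      intro i
      by_cases hi : i ≤ M₀
      · obtain ⟨δ, hδ, hneg⟩ := hcon i hi
        exact ⟨δ, hδ, fun _ t h1 h2 h3 => by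
          intro hclt
          exact absurd hclt (by
            have := hneg t h1 h2
            exact fun hc => (this (by exact h3) hc).elim)⟩
      · exact ⟨1, one_pos, fun hi' => absurd hi' hi⟩
    choose δf hδ0 hδ using hcon'
    set S : Finset ℕ := Finset.range (M₀+1) with hS
    have hSne : S.Nonempty := ⟨0, by simp [hS]⟩
    set Δ : ℝ := min ε (S.inf' hSne δf) with hΔ
    have hΔ0 : 0 < Δ := lt_min hε ((Finset.lt_inf'_iff _).2 fun j _ => hδ0 j)
    have hΔε : Δ ≤ ε := min_le_left _ _
    obtain ⟨i₁, hi₁, hcl⟩ := hmem Δ ⟨hΔ0.le, hΔε⟩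
    have hΔδ : Δ ≤ δf i₁ := le_trans (min_le_right _ _) (Finset.inf'_le δf (by simp [hS]; omega))
    exact hδ i₁ hi₁ Δ hΔ0 hΔδ hΔε hcl
  obtain ⟨i₀, hi₀, hfreq⟩ := key
  refine ⟨i₀, hi₀, fun j hj => ?_, fun j hj => ?_⟩
  · by_cases hall : ∀ l < Npp i₀ j, eval x ((lieD v)^[l] (pp i₀ j)) = 0
    · exact Or.inr hall
    · push_neg at hall
      obtain ⟨l₀, hl₀N, hl₀⟩ := hall
      have hQ : ∃ l, eval x ((lieD v)^[l] (pp i₀ j)) ≠ 0 := ⟨l₀, hl₀⟩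
      set k₁ := Nat.find hQ with hk₁def
      have hk₁ : eval x ((lieD v)^[k₁] (pp i₀ j)) ≠ 0 := Nat.find_spec hQ
      have hmin : ∀ l < k₁, eval x ((lieD v)^[l] (pp i₀ j)) = 0 := fun l hl =>
        not_not.1 (Nat.find_min hQ hl)
      have hk₁N : k₁ < Npp i₀ j := lt_of_le_of_lt (Nat.find_min' hQ hl₀) hl₀N
      rcases hk₁.lt_or_gt with hneg | hpos
      · exfalso
        obtain ⟨c, hc0, hcε, hlt⟩ := pos_after k₁
          (fun l u => -(eval (φ u) ((lieD v)^[l] (pp i₀ j)))) ε hε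
          (fun l t ht => (sol_chain hsol (pp i₀ j) l t ht).neg)
          (fun l hl => by show -(eval (φ 0)) _ = 0; rw [hφ0, hmin l hl, neg_zero])
          (by show (0:ℝ) < -(eval (φ 0)) _; rw [hφ0]; simpa using hneg)
        obtain ⟨t, ht0, htc, htε, hclt⟩ := hfreq c hc0
        have h1 := hclt.1 j hj
        have h2 := hlt t ⟨ht0, htc⟩
        simp only [Function.iterate_zero, id_eq] at h2
        linarith
      · exact Or.inl ⟨k₁, hk₁N, hmin, hpos⟩
  · have hrank := hrkq i₀ hi₀ j hj
    by_cases hall : ∀ l < Nqq i₀ j, eval x ((lieD v)^[l] (qq i₀ j)) = 0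
    · exfalso
      obtain ⟨g, hg⟩ := hrank.2
      have hzero := zero_of_rank hrank.1 hg hsol (by rw [hφ0]; exact hall)
      obtain ⟨t, ht0, htε', htε, hclt⟩ := hfreq ε hε
      have h1 := hclt.2 j hj
      have h2 := hzero t ⟨ht0.le, htε⟩ 0 hrank.1
      simp only [Function.iterate_zero, id_eq] at h2
      linarith
    · push_neg at hall
      obtain ⟨l₀, hl₀N, hl₀⟩ := hall
      have hQ : ∃ l, eval x ((lieD v)^[l] (qq i₀ j)) ≠ 0 := ⟨l₀, hl₀⟩
      set k₁ := Nat.find hQ with hk₁def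
      have hk₁ : eval x ((lieD v)^[k₁] (qq i₀ j)) ≠ 0 := Nat.find_spec hQ
      have hmin : ∀ l < k₁, eval x ((lieD v)^[l] (qq i₀ j)) = 0 := fun l hl =>
        not_not.1 (Nat.find_min hQ hl)
      have hk₁N : k₁ < Nqq i₀ j := lt_of_le_of_lt (Nat.find_min' hQ hl₀) hl₀N
      rcases hk₁.lt_or_gt with hneg | hpos
      · exfalso
        obtain ⟨c, hc0, hcε, hlt⟩ := pos_after k₁
          (fun l u => -(eval (φ u) ((lieD v)^[l] (qq i₀ j)))) ε hε
          (fun l t ht => (sol_chain hsol (qq i₀ j) l t ht).neg)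
          (fun l hl => by show -(eval (φ 0)) _ = 0; rw [hφ0, hmin l hl, neg_zero])
          (by show (0:ℝ) < -(eval (φ 0)) _; rw [hφ0]; simpa using hneg)
        obtain ⟨t, ht0, htc, htε, hclt⟩ := hfreq c hc0
        have h1 := hclt.2 j hj
        have h2 := hlt t ⟨ht0, htc⟩
        simp only [Function.iterate_zero, id_eq] at h2
        linarith
      · exact ⟨k₁, hk₁N, hmin, hpos⟩

/-- Semialgebraic invariant characterization (soundness and completeness of sAI). -/
theorem sAI_char {n : ℕ} (hn : 1 ≤ n) (f : Fin n → MvPolynomial (Fin n) ℝ)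
    (M : ℕ) (m k : ℕ → ℕ)
    (p q : ℕ → ℕ → MvPolynomial (Fin n) ℝ) (Np Nq : ℕ → ℕ → ℕ)
    (M' : ℕ) (a b : ℕ → ℕ)
    (r s : ℕ → ℕ → MvPolynomial (Fin n) ℝ) (Nr Ns : ℕ → ℕ → ℕ)
    (hNp : ∀ i ≤ M, ∀ j ≤ m i, IsRank f (p i j) (Np i j))
    (hNq : ∀ i ≤ M, ∀ j ≤ k i, IsRank f (q i j) (Nq i j))
    (hNr : ∀ i ≤ M', ∀ j ≤ a i, IsRank (fun l => -f l) (r i j) (Nr i j))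
    (hNs : ∀ i ≤ M', ∀ j ≤ b i, IsRank (fun l => -f l) (s i j) (Ns i j))
    (P : Set (Fin n → ℝ))
    (hP : P = {x | ∃ i ≤ M, (∀ j ≤ m i, 0 ≤ eval x (p i j)) ∧
        (∀ j ≤ k i, 0 < eval x (q i j))})
    (hPc : Pᶜ = {x | ∃ i ≤ M', (∀ j ≤ a i, 0 ≤ eval x (r i j)) ∧
        (∀ j ≤ b i, 0 < eval x (s i j))}) :
    (∀ ω ∈ P, ∀ T : ℝ, 0 ≤ T → ∀ φ : ℝ → (Fin n → ℝ), IsSol f T φ → φ 0 = ω →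
        ∀ t ∈ Icc (0 : ℝ) T, φ t ∈ P)
    ↔ ((∀ x ∈ P, ∃ i ≤ M, (∀ j ≤ m i, ProgGe f (p i j) (Np i j) x) ∧
          (∀ j ≤ k i, ProgGt f (q i j) (Nq i j) x)) ∧
       (∀ x ∉ P, ∃ i ≤ M', (∀ j ≤ a i, ProgGe (fun l => -f l) (r i j) (Nr i j) x) ∧
          (∀ j ≤ b i, ProgGt (fun l => -f l) (s i j) (Ns i j) x))) := by
  constructor
  · intro hinv
    constructor
    · intro x hx
      obtain ⟨ε, hε, φ, hφ0, hsol⟩ := sol_exists f x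
      have hmem : ∀ t ∈ Icc (0:ℝ) ε, ∃ i ≤ M, (∀ j ≤ m i, 0 ≤ eval (φ t) (p i j)) ∧
          (∀ j ≤ k i, 0 < eval (φ t) (q i j)) := by
        intro t ht
        have := hinv x hx ε hε.le φ hsol hφ0 t ht
        rwa [hP] at this
      exact prog_of_stay M m k p q Np Nq hNq x hε hsol hφ0 hmem
    · intro x hx
      obtain ⟨ε, hε, ψ, hψ0, hsol⟩ := sol_exists (fun l => -f l) x
      have hstay : ∀ t ∈ Icc (0:ℝ) ε, ψ t ∉ P := by
        intro s₀ hs₀ hin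
        have hs₀pos : 0 < s₀ := by
          rcases hs₀.1.lt_or_eq with h | h
          · exact h
          · exfalso; apply hx; rwa [← h, hψ0] at hin
        have hrev := hsol.reverse (t₀ := s₀) ⟨hs₀.1, hs₀.2⟩
        have hff : (fun l => -(-f l)) = f := by funext l; exact neg_neg _
        rw [hff] at hrev
        have hend := hinv (ψ (s₀ - 0)) (by simpa using hin) s₀ hs₀pos.le _ hrev rfl s₀
          ⟨le_rfl.trans hs₀pos.le, le_rfl⟩
        apply hx
        simpa [hψ0] using hend
      have hmem : ∀ t ∈ Icc (0:ℝ) ε, ∃ i ≤ M', (∀ j ≤ a i, 0 ≤ eval (ψ t) (r i j)) ∧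
          (∀ j ≤ b i, 0 < eval (ψ t) (s i j)) := by
        intro t ht
        have : ψ t ∈ Pᶜ := hstay t ht
        rwa [hPc] at this
      exact prog_of_stay M' a b r s Nr Ns hNs x hε hsol hψ0 hmem
  · rintro ⟨hfor, hback⟩ ω hω T hT φ hsol hφ0 t ht
    set A : Set ℝ := {u | u ∈ Icc 0 T ∧ ∀ u' ∈ Icc (0:ℝ) u, φ u' ∈ P} with hA
    have h0A : (0:ℝ) ∈ A := by
      refine ⟨⟨le_rfl, hT⟩, fun u hu => ?_⟩
      have : u = 0 := le_antisymm hu.2 hu.1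
      rw [this, hφ0]; exact hω
    have hbdd : BddAbove A := ⟨T, fun u hu => hu.1.2⟩
    set t₀ : ℝ := sSup A with ht₀def
    have ht₀mem : t₀ ∈ Icc 0 T := ⟨le_csSup hbdd h0A, csSup_le ⟨0, h0A⟩ fun u hu => hu.1.2⟩
    have hbelow : ∀ u, 0 ≤ u → u < t₀ → φ u ∈ P := by
      intro u hu0 hu
      obtain ⟨a', ha'A, ha'⟩ := exists_lt_of_lt_csSup ⟨0, h0A⟩ hu
      exact ha'A.2 u ⟨hu0, ha'.le⟩
    have hstar : φ t₀ ∈ P := by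
      by_contra hout
      have ht₀pos : 0 < t₀ := by
        rcases ht₀mem.1.lt_or_eq with h | h
        · exact h
        · exfalso; apply hout; rw [← h, hφ0]; exact hω
      obtain ⟨i, hi, hge, hgt⟩ := hback (φ t₀) hout
      have hrev : IsSol (fun l => -f l) t₀ (fun u => φ (t₀ - u)) := hsol.reverse ht₀mem
      obtain ⟨c, hc0, hct, hc⟩ := local_stay ht₀pos hrev (a i) (b i) (r i) (s i) (Nr i) (Ns i)
        (fun j hj => hNr i hi j hj) (fun j hj => by simpa using hge j hj)
        (fun j hj => by simpa using hgt j hj)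
      have h1 : φ (t₀ - c) ∈ Pᶜ := by
        rw [hPc]
        obtain ⟨hcp, hcq⟩ := hc c ⟨hc0, le_rfl⟩
        exact ⟨i, hi, hcp, hcq⟩
      exact h1 (hbelow (t₀ - c) (by linarith) (by linarith))
    have htT : t₀ = T := by
      by_contra hne
      have hlt : t₀ < T := lt_of_le_of_ne ht₀mem.2 hne
      obtain ⟨i, hi, hge, hgt⟩ := hfor (φ t₀) hstar
      have hsh : IsSol f (T - t₀) (fun u => φ (t₀ + u)) := hsol.shift ht₀mem
      obtain ⟨c, hc0, hcT', hc⟩ := local_stay (by linarith) hsh (m i) (k i) (p i) (q i)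
        (Np i) (Nq i) (fun j hj => hNp i hi j hj) (fun j hj => by simpa using hge j hj)
        (fun j hj => by simpa using hgt j hj)
      have hin : t₀ + c ∈ A := by
        refine ⟨⟨by linarith [ht₀mem.1], by linarith⟩, ?_⟩
        intro u hu
        rcases lt_trichotomy u t₀ with h | h | h
        · exact hbelow u hu.1 h
        · rw [h]; exact hstar
        · have : φ (t₀ + (u - t₀)) ∈ P := by
            rw [hP]
            obtain ⟨h1, h2⟩ := hc (u - t₀) ⟨by linarith, by linarith [hu.2]⟩
            exact ⟨i, hi, h1, h2⟩
          simpa using this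
      have := le_csSup hbdd hin
      linarith
    rcases lt_or_eq_of_le ht.2 with h | h
    · exact hbelow t ht.1 (htT ▸ h)
    · rw [h, ← htT]; exact hstar
end
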